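/- Let B and D be two orthogonal projectors on ℝ^N. Then the spectral norm of B·D equals 1, i.e. ‖BD‖₂ = 1, if and only if there exists a nonzero vector x ∈ ℝ^N with Bx = x and Dx = x (a vector perfectly localized in both vertex and frequency domains). (In all cases ‖BD‖₂ ≤ 1.) -/

import Mathlib

open scoped RealInnerProductSpace

section Aux

variable {E : Type*} [NormedAddCommGroup E] [InnerProductSpace ℝ E]

/-- An idempotent symmetric operator is a contraction. -/
lemma aux_proj_norm_le (b : E →L[ℝ] E) (hsym : ∀ x y : E, ⟪b x, y⟫ = ⟪x, b y⟫)
    (hid : ∀ x, b (b x) = b x) (x : E) : ‖b x‖ ≤ ‖x‖ := by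
  have h1 : ‖b x‖ ^ 2 = ⟪x, b x⟫ := by
    rw [← real_inner_self_eq_norm_sq]
    calc ⟪b x, b x⟫ = ⟪x, b (b x)⟫ := hsym x (b x)
      _ = ⟪x, b x⟫ := by rw [hid]
  have h2 : ⟪x, b x⟫ ≤ ‖x‖ * ‖b x‖ := real_inner_le_norm x (b x)
  nlinarith [norm_nonneg (b x), norm_nonneg x]

/-- If a symmetric idempotent preserves the norm of `x`, it fixes `x`. -/
lemma aux_proj_fixed (b : E →L[ℝ] E) (hsym : ∀ x y : E, ⟪b x, y⟫ = ⟪x, b y⟫)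
    (hid : ∀ x, b (b x) = b x) {x : E} (h : ‖b x‖ = ‖x‖) : b x = x := by
  have h1 : ⟪x, b x⟫ = ‖b x‖ ^ 2 := by
    rw [← real_inner_self_eq_norm_sq]
    calc ⟪x, b x⟫ = ⟪x, b (b x)⟫ := by rw [hid]
      _ = ⟪b x, b x⟫ := (hsym x (b x)).symm
  have h0 : ‖x - b x‖ ^ 2 = 0 := by
    rw [← real_inner_self_eq_norm_sq, inner_sub_left, inner_sub_right, inner_sub_right,
      real_inner_self_eq_norm_sq, real_inner_self_eq_norm_sq]
    have h2 : ‖b x‖ ^ 2 = ‖x‖ ^ 2 := by rw [h]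
    linarith [real_inner_comm (b x) x]
  have hz : x - b x = 0 :=
    norm_eq_zero.mp (pow_eq_zero_iff (n := 2) (by norm_num) |>.mp h0)
  exact (sub_eq_zero.mp hz).symm

end Aux

/-- Norm attainment for operators on a nontrivial Euclidean space. -/
lemma aux_attain {N : ℕ} (hN : 0 < N)
    (T : EuclideanSpace ℝ (Fin N) →L[ℝ] EuclideanSpace ℝ (Fin N)) :
    ∃ x : EuclideanSpace ℝ (Fin N), ‖x‖ = 1 ∧ ‖T x‖ = ‖T‖ := by
  haveI : NeZero N := ⟨hN.ne'⟩
  haveI : Nontrivial (EuclideanSpace ℝ (Fin N)) := inferInstance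
  have hne : (Metric.sphere (0 : EuclideanSpace ℝ (Fin N)) 1).Nonempty :=
    NormedSpace.sphere_nonempty.mpr zero_le_one
  obtain ⟨x, hxs, hmax⟩ := (isCompact_sphere (0 : EuclideanSpace ℝ (Fin N)) 1).exists_isMaxOn hne
    (T.continuous.norm.continuousOn)
  have hx1 : ‖x‖ = 1 := mem_sphere_zero_iff_norm.mp hxs
  refine ⟨x, hx1, le_antisymm (by simpa [hx1] using T.le_opNorm x) ?_⟩
  refine T.opNorm_le_bound (norm_nonneg _) fun y => ?_
  rcases eq_or_ne y 0 with rfl | hy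
  · simp
  · have hyn : ‖y‖ ≠ 0 := norm_ne_zero_iff.mpr hy
    have hmem : (‖y‖⁻¹ • y) ∈ Metric.sphere (0 : EuclideanSpace ℝ (Fin N)) 1 := by
      simp [norm_smul, abs_of_nonneg (inv_nonneg.mpr (norm_nonneg y)), inv_mul_cancel₀ hyn]
    have h2 : ‖y‖⁻¹ * ‖T y‖ ≤ ‖T x‖ := by
      have := hmax hmem
      simpa [map_smul, norm_smul, abs_of_nonneg (inv_nonneg.mpr (norm_nonneg y))] using this
    calc ‖T y‖ = ‖y‖ * (‖y‖⁻¹ * ‖T y‖) := by field_simp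
      _ ≤ ‖y‖ * ‖T x‖ := mul_le_mul_of_nonneg_left h2 (norm_nonneg y)
      _ = ‖T x‖ * ‖y‖ := mul_comm _ _

/-- The spectral norm of a real `N × N` matrix: the operator norm of the induced
linear map on `ℝ^N` with the Euclidean norm. -/
noncomputable def matSpectralNorm {N : ℕ} (M : Matrix (Fin N) (Fin N) ℝ) : ℝ :=
  ‖Matrix.toEuclideanCLM (𝕜 := ℝ) M‖

/-- Let `B` and `D` be orthogonal projectors on `ℝ^N`. Then `‖B·D‖₂ ≤ 1` always, and
`‖B·D‖₂ = 1` iff there exists a nonzero vector `x` with `Bx = x` and `Dx = x`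
(a vector perfectly localized in both vertex and frequency domains). -/
theorem spectral_norm_BD_eq_one_iff_perfectly_localized
    {N : ℕ} (B D : Matrix (Fin N) (Fin N) ℝ)
    (hBsym : B.transpose = B) (hDsym : D.transpose = D)
    (hBidem : B * B = B) (hDidem : D * D = D) :
    matSpectralNorm (B * D) ≤ 1 ∧
      (matSpectralNorm (B * D) = 1 ↔
        ∃ x : Fin N → ℝ, x ≠ 0 ∧ B.mulVec x = x ∧ D.mulVec x = x) := by
  set b : EuclideanSpace ℝ (Fin N) →L[ℝ] EuclideanSpace ℝ (Fin N) :=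
    Matrix.toEuclideanCLM (𝕜 := ℝ) B with hb
  set d : EuclideanSpace ℝ (Fin N) →L[ℝ] EuclideanSpace ℝ (Fin N) :=
    Matrix.toEuclideanCLM (𝕜 := ℝ) D with hd
  -- star (i.e. self-adjointness) of b and d
  have hBstar : star B = B := by
    ext i j; simp [Matrix.star_apply]; exact congrFun (congrFun hBsym i) j
  have hDstar : star D = D := by
    ext i j; simp [Matrix.star_apply]; exact congrFun (congrFun hDsym i) j
  have hbsa : IsSelfAdjoint b := by
    rw [hb, IsSelfAdjoint, ← map_star, hBstar]
  have hdsa : IsSelfAdjoint d := by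
    rw [hd, IsSelfAdjoint, ← map_star, hDstar]
  have hbsym : ∀ x y : EuclideanSpace ℝ (Fin N), ⟪b x, y⟫ = ⟪x, b y⟫ := fun x y =>
    hbsa.isSymmetric x y
  have hdsym : ∀ x y : EuclideanSpace ℝ (Fin N), ⟪d x, y⟫ = ⟪x, d y⟫ := fun x y =>
    hdsa.isSymmetric x y
  have hbid : ∀ x : EuclideanSpace ℝ (Fin N), b (b x) = b x := by
    intro x
    have : b * b = b := by rw [hb, ← map_mul, hBidem]
    calc b (b x) = (b * b) x := rfl
      _ = b x := by rw [this]
  have hdid : ∀ x : EuclideanSpace ℝ (Fin N), d (d x) = d x := by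
    intro x
    have : d * d = d := by rw [hd, ← map_mul, hDidem]
    calc d (d x) = (d * d) x := rfl
      _ = d x := by rw [this]
  have hT : Matrix.toEuclideanCLM (𝕜 := ℝ) (B * D) = b * d := by rw [map_mul]
  have hTle : ∀ x : EuclideanSpace ℝ (Fin N), ‖(b * d) x‖ ≤ ‖x‖ := fun x =>
    le_trans (aux_proj_norm_le b hbsym hbid (d x)) (aux_proj_norm_le d hdsym hdid x)
  have hle1 : matSpectralNorm (B * D) ≤ 1 := by
    rw [matSpectralNorm, hT]
    exact ContinuousLinearMap.opNorm_le_bound _ zero_le_one (fun x => by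
      simpa using hTle x)
  refine ⟨hle1, ?_, ?_⟩
  · -- forward direction
    intro hnorm
    rcases Nat.eq_zero_or_pos N with hN0 | hN
    · exfalso
      subst hN0
      have : b * d = 0 := Subsingleton.elim _ _
      rw [matSpectralNorm, hT, this, norm_zero] at hnorm
      norm_num at hnorm
    · obtain ⟨x, hx1, hxmax⟩ := aux_attain hN (b * d)
      rw [matSpectralNorm, hT] at hnorm
      have hbdx : ‖b (d x)‖ = 1 := by
        rw [show b (d x) = (b * d) x from rfl, hxmax, hnorm]
      have hdx1 : ‖d x‖ = 1 := by
        have h1 : ‖b (d x)‖ ≤ ‖d x‖ := aux_proj_norm_le b hbsym hbid (d x)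
        have h2 : ‖d x‖ ≤ ‖x‖ := aux_proj_norm_le d hdsym hdid x
        rw [hx1] at h2; rw [hbdx] at h1; linarith
      set y := d x with hy
      have hdy : d y = y := by rw [hy, hdid]
      have hby : b y = y := aux_proj_fixed b hbsym hbid (by rw [hbdx, hdx1])
      have hyne : y ≠ 0 := fun h => by rw [h, norm_zero] at hdx1; norm_num at hdx1
      refine ⟨(WithLp.equiv 2 (Fin N → ℝ)) y, ?_, ?_, ?_⟩
      · simpa using hyne
      · have := congrArg (WithLp.equiv 2 (Fin N → ℝ)) hby
        simpa [hb, Matrix.toLin'_apply] using this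
      · have := congrArg (WithLp.equiv 2 (Fin N → ℝ)) hdy
        simpa [hd, Matrix.toLin'_apply] using this
  · -- reverse direction
    rintro ⟨x, hxne, hBx, hDx⟩
    set x' : EuclideanSpace ℝ (Fin N) := (WithLp.equiv 2 (Fin N → ℝ)).symm x with hx'
    have hx'ne : x' ≠ 0 := by simpa [hx'] using hxne
    have hdx' : d x' = x' := by
      rw [hd, hx']
      simp only [WithLp.equiv_symm_apply, Matrix.toEuclideanCLM_toLp]
      rw [hDx]
    have hbx' : b x' = x' := by
      rw [hb, hx']
      simp only [WithLp.equiv_symm_apply, Matrix.toEuclideanCLM_toLp]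
      rw [hBx]
    have hTx' : (b * d) x' = x' := by
      calc (b * d) x' = b (d x') := rfl
        _ = x' := by rw [hdx', hbx']
    have hge : 1 ≤ matSpectralNorm (B * D) := by
      have h1 : ‖(b * d) x'‖ ≤ ‖b * d‖ * ‖x'‖ := (b * d).le_opNorm x'
      rw [hTx'] at h1
      have hx'pos : 0 < ‖x'‖ := norm_pos_iff.mpr hx'ne
      rw [matSpectralNorm, hT]
      exact le_of_mul_le_mul_right (by rw [one_mul]; exact h1) hx'pos
    linarith
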